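/- arXiv:2506.16261 — 3 statements merged into one kernel-verified Lean document; each statement's English description precedes it below -/
import Mathlib

section
/- Let u : [0,R] → ℝ be continuously differentiable with u(0) = 0. Then for every r ∈ [0,R], u(r)² ≤ (1/(2π)) · 2π ∫₀^r (u'(s) + u(s)/s)² s ds, i.e. u(r)² ≤ ∫₀^r (u'(s) + u(s)/s)² s ds. (Key step: 2 u u' = 2 (u/s) u' s ≤ (u' + u/s)² s pointwise.) -/
open Set intervalIntegral MeasureTheory

/-- For `u ∈ C¹([0,R])` with `u 0 = 0` (and `u s = s · v s` for a
continuous `v`, so that `u s / s` extends continuously at `0`), one has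
`u(r)² ≤ ∫₀^r (u'(s) + u(s)/s)² s ds` for every `r ∈ [0,R]`. -/
theorem stmt0 (R : ℝ) (hR : 0 < R) (u v : ℝ → ℝ)
    (hu : ContDiffOn ℝ 1 u (Icc 0 R)) (hu0 : u 0 = 0)
    (hv : ContinuousOn v (Icc 0 R)) (huv : ∀ s ∈ Icc 0 R, u s = s * v s) :
    ∀ r ∈ Icc (0:ℝ) R,
      (u r) ^ 2 ≤ ∫ s in (0:ℝ)..r, (deriv u s + u s / s) ^ 2 * s := by
  intro r hr
  set D : ℝ → ℝ := derivWithin u (Icc 0 R) with hD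
  have hIcc : Icc (0:ℝ) r ⊆ Icc 0 R := Icc_subset_Icc le_rfl hr.2
  have hDc : ContinuousOn D (Icc 0 R) :=
    hu.continuousOn_derivWithin (uniqueDiffOn_Icc hR) le_rfl
  have huc : ContinuousOn u (Icc 0 R) := hu.continuousOn
  -- FTC: u r ^ 2 = ∫ 2 u D
  have hderiv : ∀ x ∈ Ioo (0:ℝ) r,
      HasDerivAt (fun s => u s ^ 2) (2 * u x * D x) x := by
    intro x hx
    have hxR : x ∈ Ioo (0:ℝ) R := ⟨hx.1, lt_of_lt_of_le hx.2 hr.2⟩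
    have hnhds : Icc (0:ℝ) R ∈ nhds x := Icc_mem_nhds hxR.1 hxR.2
    have hdiff : DifferentiableAt ℝ u x :=
      ((hu.differentiableOn one_ne_zero) x (hIcc ⟨le_of_lt hx.1, le_of_lt hx.2⟩)).differentiableAt hnhds
    have hDx : D x = deriv u x := derivWithin_of_mem_nhds hnhds
    have h1 : HasDerivAt u (deriv u x) x := hdiff.hasDerivAt
    have h2 : HasDerivAt (fun s => u s ^ 2) _ x := h1.pow 2
    rw [hDx]
    convert h2 using 1
    ring
  have hint1 : IntervalIntegrable (fun s => 2 * u s * D s) volume 0 r := by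
    apply ContinuousOn.intervalIntegrable
    rw [uIcc_of_le hr.1]
    exact ((continuousOn_const.mul (huc.mono hIcc)).mul (hDc.mono hIcc))
  have hFTC : u r ^ 2 = ∫ s in (0:ℝ)..r, 2 * u s * D s := by
    have := intervalIntegral.integral_eq_sub_of_hasDeriv_right_of_le hr.1
      (((huc.mono hIcc).pow 2))
      (fun x hx => (hderiv x hx).hasDerivWithinAt) hint1
    rw [this, Pi.pow_apply, Pi.pow_apply, hu0]
    ring
  -- middle inequality
  have hint2 : IntervalIntegrable (fun s => (D s + v s) ^ 2 * s) volume 0 r := by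
    apply ContinuousOn.intervalIntegrable
    rw [uIcc_of_le hr.1]
    exact (((hDc.mono hIcc).add (hv.mono hIcc)).pow 2).mul continuousOn_id
  have hmono : (∫ s in (0:ℝ)..r, 2 * u s * D s) ≤
      ∫ s in (0:ℝ)..r, (D s + v s) ^ 2 * s := by
    apply intervalIntegral.integral_mono_on hr.1 hint1 hint2
    intro s hs
    have hsR : s ∈ Icc (0:ℝ) R := hIcc hs
    rw [huv s hsR]
    nlinarith [sq_nonneg (D s - v s), sq_nonneg (D s + v s), hs.1, sq_nonneg (v s), sq_nonneg (D s), mul_nonneg hs.1 (sq_nonneg (D s)), mul_nonneg hs.1 (sq_nonneg (v s))]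
  -- congruence to the stated integrand
  have hcongr : (∫ s in (0:ℝ)..r, (D s + v s) ^ 2 * s) =
      ∫ s in (0:ℝ)..r, (deriv u s + u s / s) ^ 2 * s := by
    apply intervalIntegral.integral_congr_ae
    have hne : ∀ᵐ x : ℝ, x ≠ R := by
      refine (MeasureTheory.ae_iff).2 ?_
      simp only [ne_eq, not_not]
      simp [Real.volume_singleton]
    filter_upwards [hne] with x hx hxmem
    rw [uIoc_of_le hr.1] at hxmem
    have hx0 : 0 < x := hxmem.1
    have hxR : x ∈ Icc (0:ℝ) R := ⟨le_of_lt hx0, le_trans hxmem.2 hr.2⟩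
    have hxRlt : x < R := lt_of_le_of_ne hxR.2 hx
    have hnhds : Icc (0:ℝ) R ∈ nhds x := Icc_mem_nhds hx0 hxRlt
    have hDx : D x = deriv u x := derivWithin_of_mem_nhds hnhds
    have hux : u x / x = v x := by
      rw [huv x hxR]; field_simp
    rw [hDx, hux]
  calc u r ^ 2 = ∫ s in (0:ℝ)..r, 2 * u s * D s := hFTC
    _ ≤ ∫ s in (0:ℝ)..r, (D s + v s) ^ 2 * s := hmono
    _ = _ := hcongr
end

section
/- For real numbers a, b with a ≥ 0 and b > 0, the pointwise inequality 2ab ≤ (a+b)² holds, and consequently for a radially symmetric vector field u(x) = u_r(r) e_r + u_θ(r) e_θ on the disk B_R vanishing at the origin and boundary, ‖u‖_{L^∞} ≤ (1/√(2π)) ‖∇u‖_{L²}, where ‖∇u‖²_{L²} = 2π ∫₀^R [ (∂_r u_r)² + (∂_r u_θ)² + u_r²/r² + u_θ²/r² ] r dr. -/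
open Set Real MeasureTheory intervalIntegral

lemma stmt1_aux (R : ℝ) (hR : 0 < R) (u v : ℝ → ℝ)
    (hu : ContDiffOn ℝ 1 u (Icc 0 R)) (hu0 : u 0 = 0)
    (hv : ContinuousOn v (Icc 0 R)) (huv : ∀ s ∈ Icc 0 R, u s = s * v s)
    (r : ℝ) (hr : r ∈ Icc (0:ℝ) R) :
    IntervalIntegrable (fun s => ((deriv u s) ^ 2 + (u s) ^ 2 / s ^ 2) * s) volume 0 R ∧
    u r ^ 2 ≤ ∫ s in (0:ℝ)..R, ((deriv u s) ^ 2 + (u s) ^ 2 / s ^ 2) * s := by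
  set g : ℝ → ℝ := derivWithin u (Icc 0 R) with hg_def
  have hUD : UniqueDiffOn ℝ (Icc (0:ℝ) R) := uniqueDiffOn_Icc hR
  have hg_cont : ContinuousOn g (Icc 0 R) :=
    hu.continuousOn_derivWithin hUD le_rfl
  have hu_cont : ContinuousOn u (Icc 0 R) := hu.continuousOn
  have hkey : ∀ s ∈ Ioo (0:ℝ) R, HasDerivAt u (g s) s ∧ deriv u s = g s := by
    intro s hs
    have hnhds : Icc (0:ℝ) R ∈ nhds s := Icc_mem_nhds hs.1 hs.2
    have hd : DifferentiableAt ℝ u s :=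
      ((hu.differentiableOn one_ne_zero) s (Ioo_subset_Icc_self hs)).differentiableAt hnhds
    have h1 : g s = deriv u s := by
      rw [hg_def]; exact hd.derivWithin (hUD s (Ioo_subset_Icc_self hs))
    exact ⟨h1 ▸ hd.hasDerivAt, h1.symm⟩
  set G : ℝ → ℝ := fun s => ((g s) ^ 2 + (v s) ^ 2) * s with hG_def
  have hG_cont : ContinuousOn G (Icc 0 R) :=
    ((hg_cont.pow 2).add (hv.pow 2)).mul continuousOn_id
  have hG_int : IntervalIntegrable G volume 0 R :=
    hG_cont.intervalIntegrable_of_Icc hR.le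
  set F : ℝ → ℝ := fun s => ((deriv u s) ^ 2 + (u s) ^ 2 / s ^ 2) * s with hF_def
  have hFG : ∀ s ∈ Ioo (0:ℝ) R, F s = G s := by
    intro s hs
    have hs0 : s ≠ 0 := ne_of_gt hs.1
    have h1 : deriv u s = g s := (hkey s hs).2
    have h2 : u s = s * v s := huv s (Ioo_subset_Icc_self hs)
    simp only [hF_def, hG_def, h1, h2]
    field_simp
  have hae0 : ∀ᵐ s : ℝ, s ∈ Set.uIoc (0:ℝ) R → F s = G s := by
    have h2 : ∀ᵐ s : ℝ, s ≠ R := by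
      rw [Filter.eventually_iff, mem_ae_iff]
      simpa using Real.volume_singleton
    filter_upwards [h2] with s hsR hmem
    rw [uIoc_of_le hR.le] at hmem
    exact hFG s ⟨hmem.1, lt_of_le_of_ne hmem.2 hsR⟩
  have hae : G =ᵐ[volume.restrict (Set.uIoc (0:ℝ) R)] F := by
    rw [Filter.EventuallyEq, ae_restrict_iff' measurableSet_uIoc]
    filter_upwards [hae0] with s h hs
    exact (h hs).symm
  have hF_int : IntervalIntegrable F volume 0 R := hG_int.congr_ae hae
  have hFG_int : ∫ s in (0:ℝ)..R, F s = ∫ s in (0:ℝ)..R, G s :=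
    integral_congr_ae hae0
  refine ⟨hF_int, ?_⟩
  have h0r : (0:ℝ) ≤ r := hr.1
  have hIccsub : Icc (0:ℝ) r ⊆ Icc 0 R := Icc_subset_Icc le_rfl hr.2
  set D : ℝ → ℝ := fun s => 2 * u s * g s with hD_def
  have hD_cont : ContinuousOn D (Icc 0 R) :=
    ((continuousOn_const.mul hu_cont).mul hg_cont)
  have hD_int : IntervalIntegrable D volume 0 r :=
    (hD_cont.mono hIccsub).intervalIntegrable_of_Icc h0r
  have hG_int' : IntervalIntegrable G volume 0 r :=
    (hG_cont.mono hIccsub).intervalIntegrable_of_Icc h0r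
  have hFTC : ∫ s in (0:ℝ)..r, D s = u r ^ 2 - u 0 ^ 2 := by
    apply integral_eq_sub_of_hasDerivAt_of_le h0r
    · exact ((hu_cont.mono hIccsub).pow 2)
    · intro s hs
      have hs' : s ∈ Ioo (0:ℝ) R := ⟨hs.1, lt_of_lt_of_le hs.2 hr.2⟩
      have := ((hkey s hs').1).fun_pow 2
      simpa [hD_def, mul_comm, mul_assoc, mul_left_comm] using this
    · exact hD_int
  have hDG : ∀ s ∈ Icc (0:ℝ) r, D s ≤ G s := by
    intro s hs
    have hsR : s ∈ Icc (0:ℝ) R := hIccsub hs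
    have h2 : u s = s * v s := huv s hsR
    have hvg : 2 * v s * g s ≤ (g s) ^ 2 + (v s) ^ 2 := by
      nlinarith [sq_nonneg (v s - g s)]
    have : (2 * v s * g s) * s ≤ ((g s) ^ 2 + (v s) ^ 2) * s :=
      mul_le_mul_of_nonneg_right hvg hs.1
    calc D s = (2 * v s * g s) * s := by rw [hD_def]; simp only; rw [h2]; ring
      _ ≤ G s := this
  have hmono : ∫ s in (0:ℝ)..r, D s ≤ ∫ s in (0:ℝ)..r, G s :=
    integral_mono_on h0r hD_int hG_int' hDG
  have hG_int'' : IntervalIntegrable G volume r R :=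
    (hG_cont.mono (Icc_subset_Icc h0r le_rfl)).intervalIntegrable_of_Icc hr.2
  have htail : 0 ≤ ∫ s in r..R, G s := by
    apply integral_nonneg hr.2
    intro s hs
    exact mul_nonneg (add_nonneg (sq_nonneg _) (sq_nonneg _)) (le_trans h0r hs.1)
  have hsplit : (∫ s in (0:ℝ)..r, G s) + ∫ s in r..R, G s = ∫ s in (0:ℝ)..R, G s :=
    integral_add_adjacent_intervals hG_int' hG_int''
  calc u r ^ 2 = ∫ s in (0:ℝ)..r, D s := by rw [hFTC, hu0]; ring
    _ ≤ ∫ s in (0:ℝ)..r, G s := hmono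
    _ ≤ ∫ s in (0:ℝ)..R, G s := by linarith
    _ = ∫ s in (0:ℝ)..R, F s := hFG_int.symm

/-- the pointwise inequality `2ab ≤ (a+b)²` for `a ≥ 0`, `b > 0`, and
the resulting `L^∞`–`L²` bound `‖u‖_∞ ≤ (2π)^{-1/2} ‖∇u‖_{L²}` for a radially
symmetric vector field `u = u_r e_r + u_θ e_θ` on the disk `B_R` vanishing at the
origin and on the boundary, where
`‖∇u‖²_{L²} = 2π ∫₀^R [(∂_r u_r)² + (∂_r u_θ)² + u_r²/r² + u_θ²/r²] r dr`. -/
theorem stmt1 (R : ℝ) (hR : 0 < R) (ur uθ vr vθ : ℝ → ℝ)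
    (hur : ContDiffOn ℝ 1 ur (Icc 0 R)) (huθ : ContDiffOn ℝ 1 uθ (Icc 0 R))
    (hur0 : ur 0 = 0) (huθ0 : uθ 0 = 0) (hurR : ur R = 0) (huθR : uθ R = 0)
    (hvr : ContinuousOn vr (Icc 0 R)) (hvθ : ContinuousOn vθ (Icc 0 R))
    (hurv : ∀ s ∈ Icc 0 R, ur s = s * vr s)
    (huθv : ∀ s ∈ Icc 0 R, uθ s = s * vθ s) :
    (∀ a b : ℝ, 0 ≤ a → 0 < b → 2 * a * b ≤ (a + b) ^ 2) ∧
    ∀ r ∈ Icc (0:ℝ) R,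
      Real.sqrt ((ur r) ^ 2 + (uθ r) ^ 2) ≤
        (1 / Real.sqrt (2 * π)) *
          Real.sqrt (2 * π * ∫ s in (0:ℝ)..R,
            ((deriv ur s) ^ 2 + (deriv uθ s) ^ 2 +
              (ur s) ^ 2 / s ^ 2 + (uθ s) ^ 2 / s ^ 2) * s) := by
  constructor
  · intro a b _ _; nlinarith [sq_nonneg a, sq_nonneg b]
  · intro r hr
    obtain ⟨hrint, hrle⟩ := stmt1_aux R hR ur vr hur hur0 hvr hurv r hr
    obtain ⟨hθint, hθle⟩ := stmt1_aux R hR uθ vθ huθ huθ0 hvθ huθv r hr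
    set I := (∫ s in (0:ℝ)..R, ((deriv ur s) ^ 2 + (ur s) ^ 2 / s ^ 2) * s) +
      (∫ s in (0:ℝ)..R, ((deriv uθ s) ^ 2 + (uθ s) ^ 2 / s ^ 2) * s) with hI_def
    have hsum : (∫ s in (0:ℝ)..R,
        ((deriv ur s) ^ 2 + (deriv uθ s) ^ 2 +
          (ur s) ^ 2 / s ^ 2 + (uθ s) ^ 2 / s ^ 2) * s) = I := by
      rw [hI_def, ← intervalIntegral.integral_add hrint hθint]
      apply intervalIntegral.integral_congr
      intro s _
      ring
    have hI : ur r ^ 2 + uθ r ^ 2 ≤ I := add_le_add hrle hθle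
    rw [hsum]
    have h2π : (0:ℝ) ≤ 2 * π := by positivity
    rw [Real.sqrt_mul h2π, ← mul_assoc, one_div_mul_cancel
      (by positivity : Real.sqrt (2 * π) ≠ 0), one_mul]
    exact Real.sqrt_le_sqrt hI
end

section
/- (Zlotnik's inequality) Let y ∈ W^{1,1}(0,T) satisfy y'(t) = g(y(t)) + h'(t) on [0,T] with y(0) = y⁰, where g : ℝ → ℝ is continuous with g(ζ) → -∞ as ζ → ∞, and h ∈ W^{1,1}(0,T). Suppose there are constants N₀ ≥ 0, N₁ ≥ 0 with h(t₂) - h(t₁) ≤ N₀ + N₁(t₂ - t₁) for all 0 ≤ t₁ < t₂ ≤ T. If ζ̃ is a constant such that g(ζ) ≤ -N₁ for all ζ ≥ ζ̃, then y(t) ≤ max{y⁰, ζ̃} + N₀ for all t ∈ [0,T]. -/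
open Set Filter

/-- Zlotnik's inequality: if `y' = g(y) + h'` on `[0,T]`, `g` is
continuous with `g(ζ) → -∞` as `ζ → ∞`, the increments of `h` satisfy
`h(t₂) - h(t₁) ≤ N₀ + N₁(t₂ - t₁)`, and `g(ζ) ≤ -N₁` for all `ζ ≥ ζ̃`, then
`y(t) ≤ max {y(0), ζ̃} + N₀` on `[0,T]`. -/
theorem stmt3 (T : ℝ) (hT : 0 < T) (y h g : ℝ → ℝ) (h' : ℝ → ℝ)
    (hg : Continuous g) (hgtop : Tendsto g atTop atBot)
    (hy : ∀ t ∈ Icc 0 T, HasDerivWithinAt y (g (y t) + h' t) (Icc 0 T) t)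
    (hh : ∀ t ∈ Icc 0 T, HasDerivWithinAt h (h' t) (Icc 0 T) t)
    (N₀ N₁ : ℝ) (hN₀ : 0 ≤ N₀) (hN₁ : 0 ≤ N₁)
    (hinc : ∀ t₁ t₂ : ℝ, 0 ≤ t₁ → t₁ < t₂ → t₂ ≤ T →
      h t₂ - h t₁ ≤ N₀ + N₁ * (t₂ - t₁))
    (ζt : ℝ) (hζ : ∀ ζ : ℝ, ζt ≤ ζ → g ζ ≤ -N₁) :
    ∀ t ∈ Icc 0 T, y t ≤ max (y 0) ζt + N₀ := by
  intro t ht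
  by_contra hcon
  push_neg at hcon
  set M := max (y 0) ζt with hM
  have hyc : ContinuousOn y (Icc 0 T) := fun s hs => (hy s hs).continuousWithinAt
  have hhc : ContinuousOn h (Icc 0 T) := fun s hs => (hh s hs).continuousWithinAt
  have hy0 : y 0 ≤ M := le_max_left _ _
  have htT : t ≤ T := ht.2
  have ht0 : 0 < t := by
    rcases ht.1.lt_or_eq with h0 | h0
    · exact h0
    · exfalso; rw [← h0] at hcon; linarith
  set S := {s | s ∈ Icc 0 t ∧ y s ≤ M} with hSdef
  have hSne : S.Nonempty := ⟨0, ⟨le_refl 0, ht0.le⟩, hy0⟩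
  have hsub : Icc (0:ℝ) t ⊆ Icc 0 T := Icc_subset_Icc le_rfl htT
  have hSclosed : IsClosed S := by
    have h1 := (hyc.mono hsub).preimage_isClosed_of_isClosed isClosed_Icc
      (isClosed_Iic (a := M))
    convert h1 using 1
    rfl
  have hScomp : IsCompact S :=
    isCompact_Icc.of_isClosed_subset hSclosed (fun s hs => hs.1)
  have ht₁S : sSup S ∈ S := hScomp.sSup_mem hSne
  set t₁ := sSup S with ht₁def
  have ht₁0 : 0 ≤ t₁ := ht₁S.1.1
  have ht₁t : t₁ < t := by
    rcases ht₁S.1.2.lt_or_eq with h1 | h1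
    · exact h1
    · exfalso
      have := ht₁S.2
      rw [h1] at this
      linarith
  have hmid : ∀ s ∈ Ioo t₁ t, ζt ≤ y s := by
    intro s hs
    by_contra hys
    push_neg at hys
    have hyM : y s ≤ M := le_trans hys.le (le_max_right _ _)
    have hsS : s ∈ S := ⟨⟨ht₁0.trans hs.1.le, hs.2.le⟩, hyM⟩
    exact absurd (le_csSup hScomp.bddAbove hsS) (not_le.2 hs.1)
  set φ := fun s => y s - h s + N₁ * s with hφdef
  have hφc : ContinuousOn φ (Icc t₁ t) :=
    (((hyc.sub hhc).mono (Icc_subset_Icc ht₁0 htT)).add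
      (continuous_const.mul continuous_id).continuousOn)
  have hd' : ∀ s ∈ Ioo t₁ t, HasDerivAt φ (g (y s) + N₁) s := by
    intro s hs
    have hs0 : (0:ℝ) < s := lt_of_le_of_lt ht₁0 hs.1
    have hsT : s < T := lt_of_lt_of_le hs.2 htT
    have hsIcc : s ∈ Icc (0:ℝ) T := ⟨hs0.le, hsT.le⟩
    have hnd : Icc (0:ℝ) T ∈ nhds s := Icc_mem_nhds hs0 hsT
    have hd : HasDerivAt φ (g (y s) + N₁) s := by
      have h1 : HasDerivWithinAt (fun u => y u - h u) (g (y s)) (Icc 0 T) s := by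
        have := (hy s hsIcc).sub (hh s hsIcc)
        simp only [add_sub_cancel_right] at this
        exact this
      have h2 : HasDerivAt (fun u => y u - h u) (g (y s)) s := h1.hasDerivAt hnd
      have h3 : HasDerivAt (fun u : ℝ => N₁ * u) N₁ s := by
        simpa using (hasDerivAt_id s).const_mul N₁
      exact h2.add h3
    exact hd
  have hφdiff : DifferentiableOn ℝ φ (interior (Icc t₁ t)) := by
    rw [interior_Icc]
    exact fun s hs => ((hd' s hs).differentiableAt).differentiableWithinAt
  have hφd : ∀ s ∈ interior (Icc t₁ t), deriv φ s ≤ 0 := by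
    intro s hs
    rw [interior_Icc] at hs
    rw [(hd' s hs).deriv]
    have := hζ (y s) (hmid s hs)
    linarith
  have hanti : AntitoneOn φ (Icc t₁ t) :=
    antitoneOn_of_deriv_nonpos (convex_Icc _ _) hφc hφdiff hφd
  have hkey : φ t ≤ φ t₁ := hanti ⟨le_rfl, ht₁t.le⟩ ⟨ht₁t.le, le_rfl⟩ ht₁t.le
  have hinc' := hinc t₁ t ht₁0 ht₁t htT
  have hyt₁ := ht₁S.2
  simp only [hφdef] at hkey
  linarith
end
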